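/- For every λ < 2, the function ψ(z) = √2(2-λ)/(4 sinh((2-λ)|z|/4 + c)), with c defined by tanh c = (2-λ)/2, satisfies ∫_ℝ ψ(z)² dz = λ. -/

import Mathlib

open MeasureTheory Real

private lemma coth_tendsto_one :
    Filter.Tendsto (fun t : ℝ => Real.cosh t / Real.sinh t) Filter.atTop (nhds 1) := by
  have he : Filter.Tendsto (fun t : ℝ => Real.exp (-(2 * t))) Filter.atTop (nhds 0) := by
    apply Real.tendsto_exp_atBot.comp
    have : Filter.Tendsto (fun t : ℝ => 2 * t) Filter.atTop Filter.atTop :=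
      Filter.tendsto_id.const_mul_atTop two_pos
    exact Filter.tendsto_neg_atTop_atBot.comp this
  have hmain : Filter.Tendsto (fun t : ℝ => (1 + Real.exp (-(2 * t))) / (1 - Real.exp (-(2 * t))))
      Filter.atTop (nhds 1) := by
    have := (he.const_add 1).div (he.const_sub 1) (by norm_num : (1:ℝ) - 0 ≠ 0)
    simpa [Pi.div_def] using this
  refine hmain.congr' ?_
  filter_upwards [Filter.eventually_gt_atTop (0 : ℝ)] with t ht
  have h1 : Real.exp (-t) < Real.exp t := Real.exp_lt_exp.mpr (by linarith)
  have hs : Real.exp t - Real.exp (-t) ≠ 0 := by linarith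
  have h2 : Real.exp (-(2 * t)) < 1 := by
    rw [Real.exp_lt_one_iff]; linarith
  have hd : 1 - Real.exp (-(2 * t)) ≠ 0 := by linarith
  have hee : Real.exp (-(2 * t)) = Real.exp (-t) * Real.exp (-t) := by
    rw [← Real.exp_add]; ring_nf
  have hinv : Real.exp t * Real.exp (-t) = 1 := by
    rw [← Real.exp_add]; simp
  have hd' : 1 - Real.exp (-t) * Real.exp (-t) ≠ 0 := by rw [hee] at hd; exact hd
  have hs2 : (Real.exp t - Real.exp (-t)) / 2 ≠ 0 := div_ne_zero hs two_ne_zero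
  rw [Real.cosh_eq, Real.sinh_eq, hee, div_eq_div_iff hd' hs2]
  linear_combination (Real.exp (-t)) * hinv

theorem HS_density_normalization (lam c : ℝ) (h0 : 0 ≤ lam) (h2 : lam < 2)
    (hc : 0 < c) (htanh : Real.tanh c = (2 - lam) / 2) :
    ∫ z : ℝ, (Real.sqrt 2 * (2 - lam) / (4 * Real.sinh ((2 - lam) * |z| / 4 + c)))^2 = lam := by
  have hl : 0 < 2 - lam := by linarith
  have hupos : ∀ x : ℝ, 0 ≤ x → 0 < (2 - lam) * x / 4 + c := by
    intro x hx
    have : 0 ≤ (2 - lam) * x / 4 := by positivity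
    linarith
  have hsinh : ∀ x : ℝ, 0 ≤ x → 0 < Real.sinh ((2 - lam) * x / 4 + c) :=
    fun x hx => Real.sinh_pos_iff.mpr (hupos x hx)
  rw [integral_comp_abs
    (f := fun x => (Real.sqrt 2 * (2 - lam) / (4 * Real.sinh ((2 - lam) * x / 4 + c)))^2)]
  set F : ℝ → ℝ := fun x => -((2 - lam) / 2) *
      (Real.cosh ((2 - lam) * x / 4 + c) / Real.sinh ((2 - lam) * x / 4 + c)) with hF
  have hderiv : ∀ x ∈ Set.Ici (0 : ℝ), HasDerivAt F
      ((Real.sqrt 2 * (2 - lam) / (4 * Real.sinh ((2 - lam) * x / 4 + c)))^2) x := by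
    intro x hx
    have hs := hsinh x hx
    have hu : HasDerivAt (fun x : ℝ => (2 - lam) * x / 4 + c) ((2 - lam) / 4) x := by
      simpa using (((hasDerivAt_id x).const_mul (2 - lam)).div_const 4).add_const c
    have hcosh : HasDerivAt (fun x : ℝ => Real.cosh ((2 - lam) * x / 4 + c))
        (Real.sinh ((2 - lam) * x / 4 + c) * ((2 - lam) / 4)) x :=
      (Real.hasDerivAt_cosh _).comp x hu
    have hsinh' : HasDerivAt (fun x : ℝ => Real.sinh ((2 - lam) * x / 4 + c))
        (Real.cosh ((2 - lam) * x / 4 + c) * ((2 - lam) / 4)) x :=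
      (Real.hasDerivAt_sinh _).comp x hu
    have hdiv := (hcosh.div hsinh' hs.ne')
    have H := hdiv.const_mul (-((2 - lam) / 2))
    refine H.congr_deriv ?_
    have hid : Real.cosh ((2 - lam) * x / 4 + c) ^ 2 -
        Real.sinh ((2 - lam) * x / 4 + c) ^ 2 = 1 := Real.cosh_sq_sub_sinh_sq _
    have hsq : Real.sqrt 2 ^ 2 = 2 := Real.sq_sqrt (by norm_num)
    have hnum : Real.sinh ((2 - lam) * x / 4 + c) * ((2 - lam) / 4) *
          Real.sinh ((2 - lam) * x / 4 + c) -
        Real.cosh ((2 - lam) * x / 4 + c) *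
          (Real.cosh ((2 - lam) * x / 4 + c) * ((2 - lam) / 4)) = -((2 - lam) / 4) := by
      linear_combination (-((2 - lam) / 4)) * hid
    rw [hnum, div_pow, mul_pow, hsq, mul_pow]
    have hsne := hs.ne'
    field_simp
    ring
  have hpos : ∀ x ∈ Set.Ioi (0 : ℝ),
      0 ≤ (Real.sqrt 2 * (2 - lam) / (4 * Real.sinh ((2 - lam) * x / 4 + c)))^2 :=
    fun x _ => sq_nonneg _
  have htend : Filter.Tendsto F Filter.atTop (nhds (-((2 - lam) / 2))) := by
    have harg : Filter.Tendsto (fun x : ℝ => (2 - lam) * x / 4 + c) Filter.atTop Filter.atTop := by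
      apply Filter.tendsto_atTop_add_const_right
      exact (Filter.tendsto_id.const_mul_atTop hl).atTop_div_const (by norm_num)
    have := (coth_tendsto_one.comp harg).const_mul (-((2 - lam) / 2))
    simpa [hF, Function.comp, mul_comm] using this
  have key := integral_Ioi_of_hasDerivAt_of_nonneg' hderiv hpos htend
  rw [key]
  have hsc : 0 < Real.sinh c := Real.sinh_pos_iff.mpr hc
  have hcc : 0 < Real.cosh c := Real.cosh_pos c
  have hsinh_eq : Real.sinh c = (2 - lam) / 2 * Real.cosh c := by
    have ht := Real.tanh_eq_sinh_div_cosh c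
    rw [htanh, eq_comm, div_eq_iff hcc.ne'] at ht
    linarith [ht]
  have hF0 : F 0 = -1 := by
    simp only [hF]
    rw [show (2 - lam) * 0 / 4 + c = c by ring, hsinh_eq]
    field_simp
  rw [hF0]
  ring
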